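/- Let G be a group and x, y ∈ G satisfy [x,_n y] = 1. Then ⟨x⟩^{⟨y⟩} = ⟨x, [x,y], [x,y,y], ..., [x,_{n-1} y]⟩. -/

import Mathlib

/-- The commutator `[a,b] = a⁻¹ b⁻¹ a b`. -/
def cmt {G : Type*} [Group G] (a b : G) : G := a⁻¹ * b⁻¹ * a * b

/-- Left-normed Engel commutator: `engel x y 0 = x`, `engel x y (n+1) = [engel x y n, y]`. -/
def engel {G : Type*} [Group G] (x y : G) : ℕ → G
  | 0 => x
  | n + 1 => cmt (engel x y n) y

/-- A closure is stable under conjugation if the generators are. -/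
lemma conj_closure_aux {G : Type*} [Group G] (s : Set G) (t : G)
    (hs : ∀ g ∈ s, t⁻¹ * g * t ∈ Subgroup.closure s) :
    ∀ g ∈ Subgroup.closure s, t⁻¹ * g * t ∈ Subgroup.closure s := by
  intro g hg
  induction hg using Subgroup.closure_induction with
  | mem a ha => exact hs a ha
  | one => simpa using Subgroup.one_mem _
  | mul a b _ _ ha hb =>
      have : t⁻¹ * (a * b) * t = (t⁻¹ * a * t) * (t⁻¹ * b * t) := by group
      rw [this]; exact Subgroup.mul_mem _ ha hb
  | inv a _ ha =>
      have : t⁻¹ * a⁻¹ * t = (t⁻¹ * a * t)⁻¹ := by group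
      rw [this]; exact Subgroup.inv_mem _ ha

theorem stmt11 {G : Type*} [Group G] (x y : G) (n : ℕ)
    (h : engel x y n = 1) :
    Subgroup.closure (Set.range fun k : ℤ => (y ^ k)⁻¹ * x * y ^ k) =
      Subgroup.closure {g : G | ∃ i < n, g = engel x y i} := by
  set K := Subgroup.closure {g : G | ∃ i < n, g = engel x y i} with hKdef
  set H := Subgroup.closure (Set.range fun k : ℤ => (y ^ k)⁻¹ * x * y ^ k) with hHdef
  have hone : ∀ m, engel x y (n + m) = 1 := by
    intro m
    induction m with
    | zero => simpa using h
    | succ m ih => rw [Nat.add_succ]; simp [engel, cmt, ih]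
  have hE1 : ∀ i, n ≤ i → engel x y i = 1 := by
    intro i hi
    have := hone (i - n)
    rwa [Nat.add_sub_cancel' hi] at this
  have hEinK : ∀ i, engel x y i ∈ K := by
    intro i
    rcases lt_or_ge i n with hi | hi
    · exact Subgroup.subset_closure ⟨i, hi, rfl⟩
    · rw [hE1 i hi]; exact Subgroup.one_mem _
  have hrec : ∀ i, y⁻¹ * engel x y i * y = engel x y i * engel x y (i + 1) := by
    intro i
    show _ = _ * cmt (engel x y i) y
    unfold cmt; group
  -- K is stable under conjugation by y
  have hKy : ∀ g ∈ K, y⁻¹ * g * y ∈ K := by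
    apply conj_closure_aux
    rintro g ⟨i, hi, rfl⟩
    rw [hrec i]
    exact Subgroup.mul_mem _ (hEinK i) (hEinK (i + 1))
  -- K is stable under conjugation by y⁻¹, via downward induction
  have hQ : ∀ d, y * engel x y (n - d) * y⁻¹ ∈ K := by
    intro d
    induction d with
    | zero => simp [h, Subgroup.one_mem]
    | succ d ih =>
        rcases le_or_gt n d with hd | hd
        · have e1 : n - (d + 1) = n - d := by omega
          rw [e1]; exact ih
        · set i := n - (d + 1) with hi
          have hi1 : n - d = i + 1 := by omega
          rw [hi1] at ih
          have key : y * engel x y i * y⁻¹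
              = engel x y i * (y * engel x y (i + 1) * y⁻¹)⁻¹ := by
            have h1 := (hrec i).symm
            calc y * engel x y i * y⁻¹
                = y * (engel x y i * engel x y (i + 1)) * y⁻¹
                    * (y * engel x y (i + 1) * y⁻¹)⁻¹ := by group
              _ = y * (y⁻¹ * engel x y i * y) * y⁻¹
                    * (y * engel x y (i + 1) * y⁻¹)⁻¹ := by rw [h1]
              _ = engel x y i * (y * engel x y (i + 1) * y⁻¹)⁻¹ := by group
          rw [key]
          exact Subgroup.mul_mem _ (hEinK i) (Subgroup.inv_mem _ ih)
  have hKy' : ∀ g ∈ K, y * g * y⁻¹ ∈ K := by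
    have := conj_closure_aux {g : G | ∃ i < n, g = engel x y i} y⁻¹ ?_
    · simpa using this
    · rintro g ⟨i, hi, rfl⟩
      have := hQ (n - i)
      have e1 : n - (n - i) = i := by omega
      rw [e1] at this
      simpa using this
  -- H is stable under conjugation by y
  have hHy : ∀ g ∈ H, y⁻¹ * g * y ∈ H := by
    apply conj_closure_aux
    rintro g ⟨k, rfl⟩
    apply Subgroup.subset_closure
    refine ⟨k + 1, ?_⟩
    show (y ^ (k + 1))⁻¹ * x * y ^ (k + 1) = y⁻¹ * ((y ^ k)⁻¹ * x * y ^ k) * y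
    rw [zpow_add_one]
    group
  apply le_antisymm
  · rw [hHdef]
    apply Subgroup.closure_le K |>.2
    rintro g ⟨k, rfl⟩
    simp only
    induction k using Int.induction_on with
    | zero => simpa [engel] using hEinK 0
    | succ k ih =>
        have e : (y ^ ((k : ℤ) + 1))⁻¹ * x * y ^ ((k : ℤ) + 1)
            = y⁻¹ * ((y ^ (k : ℤ))⁻¹ * x * y ^ (k : ℤ)) * y := by
          rw [zpow_add_one]; group
        rw [e]; exact hKy _ ih
    | pred k ih =>
        have e : (y ^ (-(k : ℤ) - 1))⁻¹ * x * y ^ (-(k : ℤ) - 1)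
            = y * ((y ^ (-(k : ℤ)))⁻¹ * x * y ^ (-(k : ℤ))) * y⁻¹ := by
          rw [zpow_sub_one]; group
        rw [e]; exact hKy' _ ih
  · rw [hKdef]
    apply Subgroup.closure_le H |>.2
    rintro g ⟨i, hi, rfl⟩
    clear hi
    induction i with
    | zero =>
        apply Subgroup.subset_closure
        exact ⟨0, by simp [engel]⟩
    | succ i ih =>
        have e : engel x y (i + 1)
            = (engel x y i)⁻¹ * (y⁻¹ * engel x y i * y) := by
          show cmt (engel x y i) y = _
          unfold cmt; group
        rw [e]
        exact Subgroup.mul_mem _ (Subgroup.inv_mem _ ih) (hHy _ ih)
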